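/- Every homogeneous element of degree 17 (with deg h = 1, deg s = 4) in ℤ[h,s] lies in the ideal generated by 3hs² − 6h⁵s + 2h⁹ and s³ − 12h⁸s + 5h¹²; equivalently, the degree-17 graded component of ℤ[h,s]/(3hs² − 6h⁵s + 2h⁹, s³ − 12h⁸s + 5h¹²) is zero. -/

import Mathlib

open MvPolynomial

private lemma mono_mem (a b : ℕ) (h : a + 4 * b = 17) :
    (X 0 : MvPolynomial (Fin 2) ℤ) ^ a * X 1 ^ b ∈
      Ideal.span ({3 * X 0 * X 1 ^ 2 - 6 * X 0 ^ 5 * X 1 + 2 * X 0 ^ 9,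
                   X 1 ^ 3 - 12 * X 0 ^ 8 * X 1 + 5 * X 0 ^ 12} :
        Set (MvPolynomial (Fin 2) ℤ)) := by
  rw [Ideal.mem_span_pair]
  have hb : b ≤ 4 := by omega
  interval_cases b
  · obtain rfl : a = 17 := by omega
    exact ⟨-922 * X 0 ^ 8 + 33 * X 0 ^ 4 * X 1 + 78 * X 1 ^ 2,
      369 * X 0 ^ 5 - 234 * X 0 * X 1, by ring⟩
  · obtain rfl : a = 13 := by omega
    exact ⟨-390 * X 0 ^ 8 + 14 * X 0 ^ 4 * X 1 + 33 * X 1 ^ 2,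
      156 * X 0 ^ 5 - 99 * X 0 * X 1, by ring⟩
  · obtain rfl : a = 9 := by omega
    exact ⟨-165 * X 0 ^ 8 + 6 * X 0 ^ 4 * X 1 + 14 * X 1 ^ 2,
      66 * X 0 ^ 5 - 42 * X 0 * X 1, by ring⟩
  · obtain rfl : a = 5 := by omega
    exact ⟨-70 * X 0 ^ 8 + 3 * X 0 ^ 4 * X 1 + 6 * X 1 ^ 2,
      28 * X 0 ^ 5 - 18 * X 0 * X 1, by ring⟩
  · obtain rfl : a = 1 := by omega
    exact ⟨-30 * X 0 ^ 8 + 2 * X 0 ^ 4 * X 1 + 3 * X 1 ^ 2,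
      12 * X 0 ^ 5 - 8 * X 0 * X 1, by ring⟩

/-- Every element of `ℤ[h,s]` that is homogeneous of degree 17 for the grading
`deg h = 1`, `deg s = 4` lies in the ideal `(3hs² − 6h⁵s + 2h⁹, s³ − 12h⁸s + 5h¹²)`;
i.e. the degree-17 graded piece of the Chow ring of the Cayley plane vanishes. -/
theorem cayleyChow_degree_17_vanishes
    (p : MvPolynomial (Fin 2) ℤ)
    (hp : p.IsWeightedHomogeneous (![1, 4] : Fin 2 → ℕ) 17) :
    p ∈ Ideal.span ({3 * X 0 * X 1 ^ 2 - 6 * X 0 ^ 5 * X 1 + 2 * X 0 ^ 9,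
                     X 1 ^ 3 - 12 * X 0 ^ 8 * X 1 + 5 * X 0 ^ 12} :
        Set (MvPolynomial (Fin 2) ℤ)) := by
  rw [p.as_sum]
  refine Ideal.sum_mem _ fun m hm => ?_
  have hdeg := hp (MvPolynomial.mem_support_iff.mp hm)
  have hw : m 0 + 4 * m 1 = 17 := by
    have := hdeg
    rw [Finsupp.weight_apply, Finsupp.sum_fintype] at this
    · simpa [Fin.sum_univ_two, Matrix.cons_val_zero, Matrix.cons_val_one,
        mul_comm] using this
    · intro i; simp
  have : (MvPolynomial.monomial m (p.coeff m) : MvPolynomial (Fin 2) ℤ)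
      = C (p.coeff m) * (X 0 ^ m 0 * X 1 ^ m 1) := by
    rw [MvPolynomial.monomial_eq, Finsupp.prod_fintype, Fin.prod_univ_two]
    intro i; simp
  rw [this]
  exact Ideal.mul_mem_left _ _ (mono_mem _ _ hw)
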